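/- If p(z) = 1 + c₁z + c₂z² + ... is in the Carathéodory class, then there exists x ∈ ℂ with |x| ≤ 1 such that 2c₂ = c₁² + x(4 − c₁²). -/

import Mathlib

open Metric Complex Filter
open scoped Topology NNReal


lemma normSq_mobius_identity (b w : ℂ) :
    normSq (1 - (starRingEnd ℂ) b * w) - normSq (w - b)
      = (1 - normSq b) * (1 - normSq w) := by
  simp only [normSq_apply, sub_re, sub_im, mul_re, mul_im, one_re, one_im, conj_re, conj_im]
  ring

lemma mobius_denom_ne_zero (b w : ℂ) (hb : ‖b‖ < 1) (hw : ‖w‖ ≤ 1) :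
    1 - (starRingEnd ℂ) b * w ≠ 0 := by
  intro h
  have h1 : ‖(starRingEnd ℂ) b * w‖ < 1 := by
    rw [norm_mul, RCLike.norm_conj]
    calc ‖b‖ * ‖w‖ ≤ ‖b‖ * 1 := by
          exact mul_le_mul_of_nonneg_left hw (norm_nonneg _)
      _ < 1 := by simpa using hb
  have : (1 : ℂ) = (starRingEnd ℂ) b * w := by linear_combination h
  rw [← this] at h1
  simp at h1

lemma mobius_lt_one (b w : ℂ) (hb : ‖b‖ < 1) (hw : ‖w‖ < 1) :
    ‖(w - b) / (1 - (starRingEnd ℂ) b * w)‖ < 1 := by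
  have hden := mobius_denom_ne_zero b w hb hw.le
  rw [norm_div, div_lt_one (norm_pos_iff.mpr hden)]
  have h1 : normSq b < 1 := by
    rw [← Complex.sq_norm]
    nlinarith [norm_nonneg b]
  have h2 : normSq w < 1 := by
    rw [← Complex.sq_norm]
    nlinarith [norm_nonneg w]
  have key : normSq (w - b) < normSq (1 - (starRingEnd ℂ) b * w) := by
    nlinarith [normSq_mobius_identity b w]
  have := Real.sqrt_lt_sqrt (normSq_nonneg _) key
  simpa [Complex.norm_def] using this

lemma hasFPowerSeriesAt_of_hasSum (p : ℂ → ℂ) (c : ℕ → ℂ)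
    (hsum : ∀ z ∈ ball (0:ℂ) 1, HasSum (fun n : ℕ => c n * z ^ n) (p z)) :
    HasFPowerSeriesAt p (FormalMultilinearSeries.ofScalars ℂ c) 0 := by
  refine ⟨(1/2 : ℝ≥0), ?_, ?_, ?_⟩
  · -- radius bound
    have hz : ((1:ℂ)/2) ∈ ball (0:ℂ) 1 := by
      simp [mem_ball, dist_eq_norm]
      norm_num
    have hs := (hsum _ hz).summable
    have h0 := hs.tendsto_atTop_zero
    have h1 : Filter.Tendsto (fun n : ℕ => ‖c n * ((1:ℂ)/2) ^ n‖) Filter.atTop (nhds 0) := by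
      simpa using h0.norm
    have h2 : Filter.Tendsto
        (fun n : ℕ => ‖(FormalMultilinearSeries.ofScalars ℂ c) n‖ * ((1/2 : ℝ≥0) : ℝ) ^ n)
        Filter.atTop (nhds 0) := by
      convert h1 using 2 with n
      rw [FormalMultilinearSeries.ofScalars_norm, norm_mul, norm_pow]
      norm_num
    exact FormalMultilinearSeries.le_radius_of_tendsto _ h2
  · norm_num
  · intro y hy
    rw [mem_emetric_ball_zero_iff] at hy
    have hy1 : ‖y‖ < 1/2 := by
      have := ENNReal.coe_lt_coe.mp hy
      exact_mod_cast this
    have hy2 : y ∈ ball (0:ℂ) 1 := by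
      rw [mem_ball, dist_eq_norm, sub_zero]; linarith
    have := hsum y hy2
    rw [zero_add]
    simpa only [FormalMultilinearSeries.ofScalars_apply_eq, smul_eq_mul] using this

lemma ofScalars_coeff (c : ℕ → ℂ) (n : ℕ) :
    (FormalMultilinearSeries.ofScalars ℂ c).coeff n = c n := by
  have : (FormalMultilinearSeries.ofScalars ℂ c n) (fun _ => 1) = c n := by
    rw [FormalMultilinearSeries.ofScalars_apply_eq]; simp
  exact this

lemma schwarz_coeff2 (ψ : ℂ → ℂ) (hψ : DifferentiableOn ℂ ψ (ball (0:ℂ) 1))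
    (hb : ∀ z ∈ ball (0:ℂ) 1, ‖ψ z‖ ≤ 1) :
    ‖deriv ψ 0‖ ≤ 1 - ‖ψ 0‖ ^ 2 := by
  have key : ∀ s : ℝ, s ∈ Set.Ioo (0:ℝ) 1 →
      s * ‖deriv ψ 0‖ ≤ 1 - s ^ 2 * ‖ψ 0‖ ^ 2 := by
    intro s hs
    obtain ⟨hs0, hs1⟩ := hs
    set a : ℂ := ψ 0 with ha
    have ha1 : ‖a‖ ≤ 1 := hb 0 (mem_ball_self one_pos)
    set b : ℂ := (s : ℂ) * a with hbdef
    have hbnorm : ‖b‖ < 1 := by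
      rw [hbdef, norm_mul, Complex.norm_real, Real.norm_of_nonneg hs0.le]
      nlinarith [norm_nonneg a]
    have hwlt : ∀ z ∈ ball (0:ℂ) 1, ‖(s:ℂ) * ψ z‖ < 1 := by
      intro z hz
      rw [norm_mul, Complex.norm_real, Real.norm_of_nonneg hs0.le]
      nlinarith [norm_nonneg (ψ z), hb z hz]
    set D : ℂ → ℂ := fun z => 1 - (starRingEnd ℂ) b * ((s:ℂ) * ψ z) with hD
    have hden : ∀ z ∈ ball (0:ℂ) 1, D z ≠ 0 := fun z hz =>
      mobius_denom_ne_zero b _ hbnorm (hwlt z hz).le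
    set g : ℂ → ℂ := fun z => ((s:ℂ) * ψ z - b) / D z with hg
    have hψ0 : DifferentiableAt ℂ ψ 0 :=
      hψ.differentiableAt (ball_mem_nhds _ one_pos)
    have hgd : DifferentiableOn ℂ g (ball (0:ℂ) 1) := by
      apply DifferentiableOn.div
      · exact (hψ.const_mul _).sub_const _
      · exact (differentiableOn_const _).sub ((hψ.const_mul _).const_mul _)
      · exact hden
    have hg0 : g 0 = 0 := by
      simp only [hg, hbdef, ← ha, sub_self, zero_div]
    have hmaps : Set.MapsTo g (ball (0:ℂ) 1) (ball (0:ℂ) 1) := by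
      intro z hz
      rw [mem_ball, dist_eq_norm, sub_zero]
      exact mobius_lt_one b _ hbnorm (hwlt z hz)
    have hder := Complex.norm_deriv_le_one_of_mapsTo_ball hgd
      (by rw [hg0]; exact hmaps.mono_right ball_subset_closedBall) one_pos
    -- compute deriv g 0
    have hD0 : D 0 = 1 - (normSq b : ℂ) := by
      rw [hD]
      simp only [← ha]
      rw [show (starRingEnd ℂ) b * ((s:ℂ) * a) = (starRingEnd ℂ) b * b by rw [hbdef]]
      rw [show (starRingEnd ℂ) b * b = b * (starRingEnd ℂ) b by ring, Complex.mul_conj]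
    have hNd : DifferentiableAt ℂ (fun z => (s:ℂ) * ψ z - b) 0 :=
      (hψ0.const_mul _).sub_const _
    have hDd : DifferentiableAt ℂ D 0 := by
      exact (differentiableAt_const _).sub ((hψ0.const_mul _).const_mul _)
    have hderiv : deriv g 0 = (s : ℂ) * deriv ψ 0 / D 0 := by
      rw [hg, deriv_fun_div hNd hDd (hden 0 (mem_ball_self one_pos))]
      have h1 : deriv (fun z => (s:ℂ) * ψ z - b) 0 = (s:ℂ) * deriv ψ 0 := by
        rw [deriv_sub_const, deriv_const_mul _ hψ0]
      have h2 : (s:ℂ) * ψ 0 - b = 0 := by rw [hbdef, ← ha, sub_self]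
      rw [h1, h2, zero_mul, sub_zero]
      field_simp [hden 0 (mem_ball_self one_pos)]
    rw [hderiv] at hder
    have hDnorm : ‖D 0‖ = 1 - s ^ 2 * ‖a‖ ^ 2 := by
      rw [hD0]
      have h3 : normSq b = s ^ 2 * ‖a‖ ^ 2 := by
        rw [hbdef, normSq_eq_norm_sq, norm_mul, Complex.norm_real,
          Real.norm_of_nonneg hs0.le, mul_pow]
      rw [h3]
      have hs2 : s ^ 2 ≤ 1 := by nlinarith
      have hna2 : ‖a‖ ^ 2 ≤ 1 := by nlinarith [norm_nonneg a]
      have h4 : s ^ 2 * ‖a‖ ^ 2 ≤ 1 := by nlinarith [sq_nonneg s, sq_nonneg ‖a‖]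
      rw [show (1 : ℂ) - ((s ^ 2 * ‖a‖ ^ 2 : ℝ) : ℂ) = ((1 - s ^ 2 * ‖a‖ ^ 2 : ℝ) : ℂ) by
        push_cast; ring]
      rw [Complex.norm_real, Real.norm_eq_abs, _root_.abs_of_nonneg (by linarith)]
    rw [norm_div, norm_mul] at hder
    rw [hDnorm] at hder
    have h5 : ‖((s:ℂ))‖ = s := by
      rw [Complex.norm_real, Real.norm_eq_abs, _root_.abs_of_nonneg hs0.le]
    rw [h5] at hder
    have h6 : (0:ℝ) < 1 - s ^ 2 * ‖a‖ ^ 2 := by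
      have hs2 : s ^ 2 < 1 := by nlinarith
      have hna2 : ‖a‖ ^ 2 ≤ 1 := by nlinarith [norm_nonneg a]
      nlinarith [sq_nonneg s, sq_nonneg ‖a‖]
    rw [div_le_one h6] at hder
    calc s * ‖deriv ψ 0‖ = s * ‖deriv ψ 0‖ := rfl
      _ ≤ 1 - s ^ 2 * ‖a‖ ^ 2 := hder
  -- take the limit s → 1⁻
  have htend : Tendsto (fun s : ℝ => 1 - s ^ 2 * ‖ψ 0‖ ^ 2 - s * ‖deriv ψ 0‖)
      (𝓝[<] (1:ℝ)) (𝓝 (1 - 1 ^ 2 * ‖ψ 0‖ ^ 2 - 1 * ‖deriv ψ 0‖)) := by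
    apply Filter.Tendsto.mono_left _ nhdsWithin_le_nhds
    exact Filter.Tendsto.sub (Filter.Tendsto.sub tendsto_const_nhds
      (((continuous_pow 2).tendsto 1).mul_const _)) (tendsto_id.mul_const _)
  have hev : ∀ᶠ s in 𝓝[<] (1:ℝ), 0 ≤ 1 - s ^ 2 * ‖ψ 0‖ ^ 2 - s * ‖deriv ψ 0‖ := by
    filter_upwards [Ioo_mem_nhdsLT_of_mem ⟨(by norm_num : (0:ℝ) < 1), le_rfl⟩] with s hs
    linarith [key s hs]
  have := ge_of_tendsto htend hev
  simp only [one_pow, one_mul] at this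
  linarith

/-- If `p(z) = 1 + c₁z + c₂z² + ⋯` is in the Carathéodory class, then there exists `x ∈ ℂ`
with `|x| ≤ 1` such that `2c₂ = c₁² + x(4 − c₁²)`. -/
theorem caratheodory_c2 (p : ℂ → ℂ) (c : ℕ → ℂ)
    (hp : DifferentiableOn ℂ p (ball (0 : ℂ) 1))
    (hp0 : p 0 = 1)
    (hre : ∀ z ∈ ball (0 : ℂ) 1, 0 < (p z).re)
    (hsum : ∀ z ∈ ball (0 : ℂ) 1, HasSum (fun n : ℕ => c n * z ^ n) (p z)) :
    ∃ x : ℂ, ‖x‖ ≤ 1 ∧ 2 * c 2 = (c 1) ^ 2 + x * (4 - (c 1) ^ 2) := by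
  have hP : HasFPowerSeriesAt p (FormalMultilinearSeries.ofScalars ℂ c) 0 :=
    hasFPowerSeriesAt_of_hasSum p c hsum
  have hpd0 : DifferentiableAt ℂ p 0 := hP.differentiableAt
  have hderiv_p : deriv p 0 = c 1 := by rw [hP.deriv]; exact ofScalars_coeff c 1
  set h : ℂ → ℂ := dslope p 0 with hhdef
  have hh : HasFPowerSeriesAt h (FormalMultilinearSeries.ofScalars ℂ c).fslope 0 :=
    hP.has_fpower_series_dslope_fslope
  have hderiv_h : deriv h 0 = c 2 := by
    have e : (FormalMultilinearSeries.ofScalars ℂ c).fslope.coeff 1 = c 2 := by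
      rw [FormalMultilinearSeries.coeff_fslope]; exact ofScalars_coeff c 2
    rw [hh.deriv]; exact e
  have hh0 : h 0 = c 1 := by rw [hhdef, dslope_same, hderiv_p]
  have hpne : ∀ z ∈ ball (0:ℂ) 1, p z + 1 ≠ 0 := by
    intro z hz hcon
    have h1 : (p z + 1).re > 0 := by
      simp only [add_re, one_re]
      linarith [hre z hz]
    rw [hcon] at h1
    simp at h1
  set φ : ℂ → ℂ := fun z => (p z - 1) / (p z + 1) with hφdef
  have hφd : DifferentiableOn ℂ φ (ball (0:ℂ) 1) :=
    (hp.sub_const 1).div (hp.add_const 1) hpne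
  have hφ0 : φ 0 = 0 := by simp [hφdef, hp0]
  have hφlt : ∀ z ∈ ball (0:ℂ) 1, ‖φ z‖ < 1 := by
    intro z hz
    have hne := hpne z hz
    rw [hφdef]
    simp only
    rw [norm_div, div_lt_one (norm_pos_iff.mpr hne)]
    have hid : normSq (p z + 1) - normSq (p z - 1) = 4 * (p z).re := by
      simp only [normSq_apply, add_re, add_im, sub_re, sub_im, one_re, one_im]
      ring
    have hlt : normSq (p z - 1) < normSq (p z + 1) := by
      have := hre z hz
      nlinarith
    have := Real.sqrt_lt_sqrt (normSq_nonneg _) hlt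
    simpa [Complex.norm_def] using this
  have hφmaps : Set.MapsTo φ (ball (0:ℂ) 1) (ball (φ 0) 1) := by
    intro z hz
    rw [hφ0, mem_ball, dist_eq_norm, sub_zero]
    exact hφlt z hz
  have hhd : DifferentiableOn ℂ h (ball (0:ℂ) 1) :=
    (differentiableOn_dslope (ball_mem_nhds _ one_pos)).mpr hp
  set ψ : ℂ → ℂ := fun z => h z / (p z + 1) with hψdef
  have hψd : DifferentiableOn ℂ ψ (ball (0:ℂ) 1) :=
    hhd.div (hp.add_const 1) hpne
  have hψeq : ∀ z ∈ ball (0:ℂ) 1, z ≠ 0 → ψ z = dslope φ 0 z := by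
    intro z hz hz0
    rw [dslope_of_ne _ hz0, slope_def_field, hφdef, hψdef]
    simp only [hφ0, sub_zero]
    rw [hhdef, dslope_of_ne _ hz0, slope_def_field, hp0]
    field_simp
    ring
  have hψb : ∀ z ∈ ball (0:ℂ) 1, ‖ψ z‖ ≤ 1 := by
    intro z hz
    rcases eq_or_ne z 0 with rfl | hz0
    · -- continuity argument
      have hcont : ContinuousAt ψ 0 :=
        (hψd.differentiableAt (ball_mem_nhds _ one_pos)).continuousAt
      have htend : Tendsto (fun z => ‖ψ z‖) (𝓝[≠] (0:ℂ)) (𝓝 ‖ψ 0‖) :=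
        (hcont.norm.tendsto).mono_left nhdsWithin_le_nhds
      refine le_of_tendsto htend ?_
      have hball : ∀ᶠ z in 𝓝[≠] (0:ℂ), z ∈ ball (0:ℂ) 1 :=
        eventually_nhdsWithin_of_eventually_nhds (ball_mem_nhds _ one_pos)
      filter_upwards [hball, self_mem_nhdsWithin] with z hz1 hz2
      rw [hψeq z hz1 hz2]
      simpa using
        Complex.norm_dslope_le_div_of_mapsTo_ball hφd (hφmaps.mono_right ball_subset_closedBall) hz1
    · rw [hψeq z hz hz0]
      simpa using Complex.norm_dslope_le_div_of_mapsTo_ball hφd (hφmaps.mono_right ball_subset_closedBall) hz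
  have hψ0 : ψ 0 = c 1 / 2 := by
    rw [hψdef]
    simp only [hh0, hp0]
    norm_num
  have hψderiv : deriv ψ 0 = (2 * c 2 - (c 1) ^ 2) / 4 := by
    rw [hψdef]
    rw [deriv_fun_div hh.differentiableAt (hpd0.add_const 1) (hpne 0 (mem_ball_self one_pos))]
    rw [deriv_add_const, hderiv_h, hderiv_p, hh0, hp0]
    ring_nf
  have hkey := schwarz_coeff2 ψ hψd hψb
  rw [hψ0, hψderiv] at hkey
  have hkey2 : ‖2 * c 2 - (c 1) ^ 2‖ ≤ 4 - ‖c 1‖ ^ 2 := by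
    rw [norm_div, norm_div] at hkey
    simp only [Complex.norm_ofNat] at hkey
    nlinarith [norm_nonneg (c 1), norm_nonneg (2 * c 2 - (c 1)^2)]
  by_cases hc : (4:ℂ) - (c 1) ^ 2 = 0
  · refine ⟨0, by norm_num, ?_⟩
    have h41 : ((c 1) ^ 2 : ℂ) = 4 := by linear_combination -hc
    have hn : ‖c 1‖ ^ 2 = 4 := by
      rw [← norm_pow, h41]
      norm_num
    have : ‖2 * c 2 - (c 1) ^ 2‖ ≤ 0 := by rw [hn] at hkey2; linarith
    have h0 : 2 * c 2 - (c 1) ^ 2 = 0 :=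
      norm_le_zero_iff.mp this
    rw [zero_mul, add_zero]
    linear_combination h0
  · refine ⟨(2 * c 2 - (c 1) ^ 2) / (4 - (c 1) ^ 2), ?_, ?_⟩
    · rw [norm_div, div_le_one (norm_pos_iff.mpr hc)]
      have hlb : 4 - ‖c 1‖ ^ 2 ≤ ‖(4:ℂ) - (c 1) ^ 2‖ := by
        have := norm_sub_norm_le (4:ℂ) ((c 1) ^ 2)
        rw [norm_pow] at this
        simpa using this
      linarith [hkey2]
    · field_simp
      ring
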